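/- Let G be a group in 𝒞_D containing all zero-distributed pairs ({C_n}, 0) with {C_n} ∼_σ 0, and assume that every measurable function k : D → ℂ is a symbol for G (for every measurable k there exists {A_n} ∈ 𝔈 with ({A_n},k) ∈ G). Then G is closed: whenever ({B_{n,m}}_n, k_m) ∈ G for all m, {A_n} ∈ 𝔈, k : D → ℂ measurable, d_acs({B_{n,m}}_n, {A_n}) → 0 and d_m(k_m, k) → 0, one has ({A_n}, k) ∈ G. -/

import Mathlib

open MeasureTheory Filter
open scoped ENNReal NNReal

/-- The singular values of a complex square matrix, arranged in non-increasing order: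
`sv A 0 = σ₁(A) ≥ sv A 1 = σ₂(A) ≥ …` (the square roots of the eigenvalues of `Aᴴ * A`). -/
noncomputable def sv {n : ℕ} (A : Matrix (Fin n) (Fin n) ℂ) : Fin n → ℝ :=
  fun i =>
    (fun j => Real.sqrt ((Matrix.isHermitian_conjTranspose_mul_self A).eigenvalues j))
      (Tuple.sort (fun j => Real.sqrt ((Matrix.isHermitian_conjTranspose_mul_self A).eigenvalues j))
        i.rev)

/-- `p(A) := min_{1 ≤ i ≤ n} ((i-1)/n + σᵢ(A))` (here `i : Fin n` plays the role of `i-1`). -/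
noncomputable def pA {n : ℕ} (A : Matrix (Fin n) (Fin n) ℂ) : ℝ :=
  ⨅ i : Fin n, (((i : ℕ) : ℝ) / n + sv A i)

/-- `ρ({A_n}) := limsup_{n→∞} p(A_n)`, valued in `[0,∞]`. -/
noncomputable def rho (A : (n : ℕ) → Matrix (Fin n) (Fin n) ℂ) : ℝ≥0∞ :=
  Filter.limsup (fun n => ENNReal.ofReal (pA (A n))) Filter.atTop

/-- The a.c.s. pseudometric `d_acs({A_n},{B_n}) := ρ({A_n − B_n})`. -/
noncomputable def dacs (A B : (n : ℕ) → Matrix (Fin n) (Fin n) ℂ) : ℝ≥0∞ :=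
  rho (fun n => A n - B n)

/-- `{A_n} ∼_σ k` : the sequence `{A_n}` has spectral (singular value) symbol `k` on `D`. -/
def SpecSymb {d : ℕ} (D : Set (Fin d → ℝ)) (A : (n : ℕ) → Matrix (Fin n) (Fin n) ℂ)
    (k : (Fin d → ℝ) → ℂ) : Prop :=
  ∀ F : ℝ → ℂ, Continuous F → HasCompactSupport F →
    Filter.Tendsto (fun n : ℕ => (n : ℂ)⁻¹ * ∑ i : Fin n, F (sv (A n) i)) Filter.atTop
      (nhds ((volume D).toReal⁻¹ • ∫ x in D, F ‖k x‖))

/-- `p_m(f) := inf_{E ⊆ D measurable} ( |D∖E|/|D| + esssup_{x∈E} |f(x)| )`, valued in `[0,∞]`. -/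
noncomputable def pm {d : ℕ} (D : Set (Fin d → ℝ)) (f : (Fin d → ℝ) → ℂ) : ℝ≥0∞ :=
  ⨅ (E : Set (Fin d → ℝ)) (_ : MeasurableSet E) (_ : E ⊆ D),
    (volume (D \ E) / volume D + essSup (fun x => (‖f x‖₊ : ℝ≥0∞)) (volume.restrict E))

/-- `d_m(f,g) := p_m(f − g)`. -/
noncomputable def dm {d : ℕ} (D : Set (Fin d → ℝ)) (f g : (Fin d → ℝ) → ℂ) : ℝ≥0∞ :=
  pm D (fun x => f x - g x)

/-- A "group in 𝒞_D": a set `G` of pairs `({A_n}, k)` with `k` measurable and `{A_n} ∼_σ k`,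
closed under addition and negation. -/
def IsGroupIn {d : ℕ} (D : Set (Fin d → ℝ))
    (G : Set (((n : ℕ) → Matrix (Fin n) (Fin n) ℂ) × ((Fin d → ℝ) → ℂ))) : Prop :=
  (∀ p ∈ G, Measurable p.2 ∧ SpecSymb D p.1 p.2) ∧
  (∀ p ∈ G, ∀ q ∈ G, ((fun n => p.1 n + q.1 n), p.2 + q.2) ∈ G) ∧
  (∀ p ∈ G, ((fun n => -(p.1 n)), -p.2) ∈ G)


section AuxLemmas
open Matrix Finset
open scoped ComplexOrder

noncomputable def svH {n : ℕ} (M : Matrix (Fin n) (Fin n) ℂ) (hM : M.IsHermitian) : Fin n → ℝ :=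
  fun i => (fun j => Real.sqrt (hM.eigenvalues j))
      (Tuple.sort (fun j => Real.sqrt (hM.eigenvalues j)) i.rev)

lemma sv_eq_svH {n : ℕ} (A : Matrix (Fin n) (Fin n) ℂ) :
    sv A = svH (Aᴴ * A) (Matrix.isHermitian_conjTranspose_mul_self A) := rfl

lemma svH_congr {n : ℕ} {M M' : Matrix (Fin n) (Fin n) ℂ} (h : M = M') (h1 : M.IsHermitian)
    (h2 : M'.IsHermitian) : svH M h1 = svH M' h2 := by subst h; rfl

lemma sv_congr {n : ℕ} {X Y : Matrix (Fin n) (Fin n) ℂ} (h : Xᴴ * X = Yᴴ * Y) : sv X = sv Y := by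
  rw [sv_eq_svH, sv_eq_svH]; exact svH_congr h _ _

lemma sv_neg {n : ℕ} (X : Matrix (Fin n) (Fin n) ℂ) : sv (-X) = sv X :=
  sv_congr (by simp)

lemma sv_nonneg {n : ℕ} (A : Matrix (Fin n) (Fin n) ℂ) (i : Fin n) : 0 ≤ sv A i :=
  Real.sqrt_nonneg _

lemma sv_antitone {n : ℕ} (A : Matrix (Fin n) (Fin n) ℂ) : Antitone (sv A) := by
  intro i j hij
  exact Tuple.monotone_sort
    (fun j => Real.sqrt ((Matrix.isHermitian_conjTranspose_mul_self A).eigenvalues j))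
    (Fin.rev_le_rev.2 hij)

-- permutation invariance of counting
lemma card_filter_comp_equiv {n : ℕ} (e : Equiv.Perm (Fin n)) (P : Fin n → Prop)
    [DecidablePred P] :
    (Finset.univ.filter fun i => P (e i)).card = (Finset.univ.filter P).card := by
  apply Finset.card_bij (fun i _ => e i)
  · intro a ha; simp_all
  · intro a ha b hb hab; exact e.injective hab
  · intro b hb; exact ⟨e.symm b, by simp_all⟩

lemma card_filter_sv {n : ℕ} (A : Matrix (Fin n) (Fin n) ℂ) (P : ℝ → Prop) [DecidablePred P] :
    (Finset.univ.filter fun i => P (sv A i)).card =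
      (Finset.univ.filter fun j =>
        P (Real.sqrt ((Matrix.isHermitian_conjTranspose_mul_self A).eigenvalues j))).card := by
  classical
  set g : Fin n → ℝ := fun j => Real.sqrt ((Matrix.isHermitian_conjTranspose_mul_self A).eigenvalues j)
    with hg
  have h : ∀ i, sv A i = g ((Fin.revPerm.trans (Tuple.sort g)) i) := fun i => rfl
  simp only [h]
  exact card_filter_comp_equiv (Fin.revPerm.trans (Tuple.sort g)) (fun x => P (g x))



lemma toEuclideanLin_eigen {M : Matrix (Fin n) (Fin n) ℂ} (hM : M.IsHermitian) (j : Fin n) :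
    Matrix.toEuclideanLin M (hM.eigenvectorBasis j) =
      hM.eigenvalues j • hM.eigenvectorBasis j := by
  have h := hM.mulVec_eigenvectorBasis j
  apply (WithLp.equiv 2 ((Fin n) → ℂ)).injective
  simpa [Matrix.toEuclideanLin_apply] using h

lemma qf (M : Matrix (Fin n) (Fin n) ℂ) (hM : M.IsHermitian) (v : EuclideanSpace ℂ (Fin n)) :
    (inner ℂ v (Matrix.toEuclideanLin M v) : ℂ) =
      ∑ j, ((hM.eigenvalues j : ℂ) * (‖hM.eigenvectorBasis.repr v j‖ ^ 2 : ℝ)) := by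
  set b := hM.eigenvectorBasis with hb
  set w : Fin n → ℂ := fun j => b.repr v j with hw
  have hv : v = ∑ j, w j • b j := (b.sum_repr v).symm
  have hMv : Matrix.toEuclideanLin M v = ∑ j, (w j * (hM.eigenvalues j : ℂ)) • b j := by
    conv_lhs => rw [hv, map_sum]
    refine Finset.sum_congr rfl fun j _ => ?_
    rw [_root_.map_smul, toEuclideanLin_eigen hM j,
      RCLike.real_smul_eq_coe_smul (K := ℂ), smul_smul, ← hb]
    rfl
  rw [hMv, inner_sum]
  congr 1; funext j
  rw [inner_smul_right]
  have h1 : (inner ℂ v (b j) : ℂ) = starRingEnd ℂ (w j) := by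
    rw [← inner_conj_symm]; congr 1; exact (b.repr_apply_apply v j).symm
  rw [h1]
  have h2 : w j * starRingEnd ℂ (w j) = ((‖w j‖ ^ 2 : ℝ) : ℂ) := by
    rw [Complex.mul_conj]
    norm_cast
    exact Complex.normSq_eq_norm_sq _
  rw [mul_comm (w j), mul_assoc, h2]

lemma inner_gram (A : Matrix (Fin n) (Fin n) ℂ) (v : EuclideanSpace ℂ (Fin n)) :
    (inner ℂ v (Matrix.toEuclideanLin (Aᴴ * A) v) : ℂ) =
      ((‖Matrix.toEuclideanLin A v‖ : ℝ) : ℂ) ^ 2 := by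
  have h1 : Matrix.toEuclideanLin (Aᴴ * A) v =
      Matrix.toEuclideanLin Aᴴ (Matrix.toEuclideanLin A v) := by
    apply (WithLp.equiv 2 ((Fin n) → ℂ)).injective
    simp [Matrix.toEuclideanLin_apply, Matrix.mulVec_mulVec]
  rw [h1, Matrix.toEuclideanLin_conjTranspose_eq_adjoint, LinearMap.adjoint_inner_right,
    inner_self_eq_norm_sq_to_K]
  rfl

/-- singular-value-squared decomposition of ‖Av‖². -/
lemma norm_toEuclideanLin_sq (A : Matrix (Fin n) (Fin n) ℂ) (v : EuclideanSpace ℂ (Fin n)) :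
    ‖Matrix.toEuclideanLin A v‖ ^ 2 =
      ∑ j, (Matrix.isHermitian_conjTranspose_mul_self A).eigenvalues j *
        ‖(Matrix.isHermitian_conjTranspose_mul_self A).eigenvectorBasis.repr v j‖ ^ 2 := by
  have h := (inner_gram A v).symm.trans (qf (Aᴴ * A) (Matrix.isHermitian_conjTranspose_mul_self A) v)
  exact_mod_cast h

lemma norm_sq_coords (b : OrthonormalBasis (Fin n) ℂ (EuclideanSpace ℂ (Fin n)))
    (v : EuclideanSpace ℂ (Fin n)) : ‖v‖ ^ 2 = ∑ j, ‖b.repr v j‖ ^ 2 := by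
  rw [← b.repr.norm_map v, EuclideanSpace.norm_eq, Real.sq_sqrt]
  positivity

variable {n : ℕ}

lemma finrank_span_ONB (b : OrthonormalBasis (Fin n) ℂ (EuclideanSpace ℂ (Fin n)))
    (S : Finset (Fin n)) :
    Module.finrank ℂ (Submodule.span ℂ (⇑b '' ↑S)) = S.card := by
  classical
  have hinj : Function.Injective ⇑b := b.orthonormal.linearIndependent.injective
  have hli : LinearIndependent ℂ (fun x : (↑S : Set (Fin n)) => b x) :=
    b.orthonormal.linearIndependent.comp _ Subtype.val_injective
  have hr : Set.range (fun x : (↑S : Set (Fin n)) => b x) = ⇑b '' ↑S := by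
    rw [show (fun x : (↑S : Set (Fin n)) => b ↑x) = ⇑b ∘ Subtype.val from rfl, Set.range_comp,
      Subtype.range_val]
  have hli2 : LinearIndependent ℂ ((↑) : (⇑b '' (↑S : Set (Fin n))) → EuclideanSpace ℂ (Fin n)) :=
    hr ▸ (linearIndepOn_id_range_iff hli.injective).mpr hli
  have hcoe : ↑(S.image ⇑b) = ⇑b '' (↑S : Set (Fin n)) := Finset.coe_image
  rw [← hcoe] at hli2
  rw [← hcoe, finrank_span_finset_eq_card hli2, Finset.card_image_of_injective _ hinj]

lemma span_coord_vanish (b : OrthonormalBasis (Fin n) ℂ (EuclideanSpace ℂ (Fin n)))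
    (S : Finset (Fin n)) {v : EuclideanSpace ℂ (Fin n)}
    (hv : v ∈ Submodule.span ℂ (⇑b '' ↑S)) {j : Fin n} (hj : j ∉ S) : b.repr v j = 0 := by
  induction hv using Submodule.span_induction with
  | mem x hx =>
      obtain ⟨i, hi, rfl⟩ := hx
      rw [b.repr_self, EuclideanSpace.single_apply]
      have hne : j ≠ i := fun h => hj (h.symm ▸ hi)
      rw [if_neg hne]
  | zero => simp
  | add x y _ _ hx hy => rw [map_add]; exact by simp [hx, hy]
  | smul c x _ hx => rw [_root_.map_smul]; simp [hx]

lemma weyl_count {n : ℕ} (X Y : Matrix (Fin n) (Fin n) ℂ) {a b : ℝ} (ha : 0 ≤ a) (hb : 0 ≤ b) :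
    (Finset.univ.filter fun i => a + b < sv (X + Y) i).card ≤
      (Finset.univ.filter fun i => a < sv X i).card +
        (Finset.univ.filter fun i => b < sv Y i).card := by
  classical
  rw [card_filter_sv, card_filter_sv, card_filter_sv]
  set hZ := Matrix.isHermitian_conjTranspose_mul_self (X + Y) with hZdef
  set hX := Matrix.isHermitian_conjTranspose_mul_self X with hXdef
  set hY := Matrix.isHermitian_conjTranspose_mul_self Y with hYdef
  set SZ := Finset.univ.filter (fun j => a + b < Real.sqrt (hZ.eigenvalues j)) with hSZ
  set SX := Finset.univ.filter (fun j => a < Real.sqrt (hX.eigenvalues j)) with hSX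
  set SY := Finset.univ.filter (fun j => b < Real.sqrt (hY.eigenvalues j)) with hSY
  by_contra hcon
  push_neg at hcon
  set SXc := Finset.univ.filter (fun j => ¬ a < Real.sqrt (hX.eigenvalues j)) with hSXc
  set SYc := Finset.univ.filter (fun j => ¬ b < Real.sqrt (hY.eigenvalues j)) with hSYc
  have hcardX : SX.card + SXc.card = n := by
    rw [hSX, hSXc, Finset.card_filter_add_card_filter_not]; simp
  have hcardY : SY.card + SYc.card = n := by
    rw [hSY, hSYc, Finset.card_filter_add_card_filter_not]; simp
  set W := Submodule.span ℂ (⇑hZ.eigenvectorBasis '' ↑SZ) with hW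
  set U := Submodule.span ℂ (⇑hX.eigenvectorBasis '' ↑SXc) with hU
  set V := Submodule.span ℂ (⇑hY.eigenvectorBasis '' ↑SYc) with hV
  have frW : Module.finrank ℂ W = SZ.card := finrank_span_ONB _ _
  have frU : Module.finrank ℂ U = SXc.card := finrank_span_ONB _ _
  have frV : Module.finrank ℂ V = SYc.card := finrank_span_ONB _ _
  have hdim : Module.finrank ℂ (EuclideanSpace ℂ (Fin n)) = n := finrank_euclideanSpace_fin
  have h1 := Submodule.finrank_sup_add_finrank_inf_eq U V
  have h1' : Module.finrank ℂ ↥(U ⊔ V) ≤ n := by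
    exact le_trans (Submodule.finrank_le _) (le_of_eq hdim)
  have h2 := Submodule.finrank_sup_add_finrank_inf_eq W (U ⊓ V)
  have h2' : Module.finrank ℂ ↥(W ⊔ (U ⊓ V)) ≤ n := by
    exact le_trans (Submodule.finrank_le _) (le_of_eq hdim)
  have hpos : 0 < Module.finrank ℂ ↥(W ⊓ (U ⊓ V)) := by omega
  have hnebot : W ⊓ (U ⊓ V) ≠ ⊥ := by
    intro h
    rw [h, finrank_bot] at hpos
    exact lt_irrefl _ hpos
  obtain ⟨v, hv, hv0⟩ := (Submodule.ne_bot_iff _).1 hnebot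
  obtain ⟨hvW, hvU, hvV⟩ : v ∈ W ∧ v ∈ U ∧ v ∈ V := by
    simpa [Submodule.mem_inf] using hv
  -- bound for X
  have keyXY : ∀ (X' : Matrix (Fin n) (Fin n) ℂ) (a' : ℝ), 0 ≤ a' →
      (∀ j, j ∉ (Finset.univ.filter (fun j => ¬ a' < Real.sqrt
        ((Matrix.isHermitian_conjTranspose_mul_self X').eigenvalues j))) →
        (Matrix.isHermitian_conjTranspose_mul_self X').eigenvectorBasis.repr v j = 0) →
      ‖Matrix.toEuclideanLin X' v‖ ≤ a' * ‖v‖ := by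
    intro X' a' ha' hvan
    set hX' := Matrix.isHermitian_conjTranspose_mul_self X'
    have hsq : ‖Matrix.toEuclideanLin X' v‖ ^ 2 ≤ (a' * ‖v‖) ^ 2 := by
      rw [norm_toEuclideanLin_sq, mul_pow, norm_sq_coords hX'.eigenvectorBasis v,
        Finset.mul_sum]
      apply Finset.sum_le_sum
      intro j _
      by_cases hj : j ∈ Finset.univ.filter (fun j => ¬ a' < Real.sqrt (hX'.eigenvalues j))
      · have hle : Real.sqrt (hX'.eigenvalues j) ≤ a' := not_lt.1 (by simpa using hj)
        have hnn : 0 ≤ hX'.eigenvalues j :=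
          (Matrix.posSemidef_conjTranspose_mul_self X').eigenvalues_nonneg j
        have : hX'.eigenvalues j ≤ a' ^ 2 := by
          have := mul_self_le_mul_self (Real.sqrt_nonneg _) hle
          rwa [Real.mul_self_sqrt hnn, ← pow_two] at this
        exact mul_le_mul_of_nonneg_right this (by positivity)
      · rw [hvan j hj]
        simp
    have := Real.sqrt_le_sqrt hsq
    rwa [Real.sqrt_sq (norm_nonneg _), Real.sqrt_sq (by positivity)] at this
  have hXb : ‖Matrix.toEuclideanLin X v‖ ≤ a * ‖v‖ :=
    keyXY X a ha (fun j hj => span_coord_vanish _ _ hvU hj)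
  have hYb : ‖Matrix.toEuclideanLin Y v‖ ≤ b * ‖v‖ :=
    keyXY Y b hb (fun j hj => span_coord_vanish _ _ hvV hj)
  -- lower bound for Z
  have hrepr0 : ∃ j0, j0 ∈ SZ ∧ hZ.eigenvectorBasis.repr v j0 ≠ 0 := by
    by_contra hall
    push_neg at hall
    apply hv0
    have : hZ.eigenvectorBasis.repr v = 0 := by
      ext j
      by_cases hj : j ∈ SZ
      · exact hall j hj
      · exact span_coord_vanish _ _ hvW hj
    have := congrArg hZ.eigenvectorBasis.repr.symm this
    simpa using this
  obtain ⟨j0, hj0, hj0ne⟩ := hrepr0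
  have hZlow : ((a + b) * ‖v‖) ^ 2 < ‖Matrix.toEuclideanLin (X + Y) v‖ ^ 2 := by
    rw [norm_toEuclideanLin_sq, mul_pow, norm_sq_coords hZ.eigenvectorBasis v, Finset.mul_sum]
    apply Finset.sum_lt_sum
    · intro j _
      by_cases hj : j ∈ SZ
      · have hlt : a + b < Real.sqrt (hZ.eigenvalues j) := by
          rw [hSZ] at hj; simpa using hj
        have hnn : 0 ≤ hZ.eigenvalues j :=
          (Matrix.posSemidef_conjTranspose_mul_self (X + Y)).eigenvalues_nonneg j
        have : (a + b) ^ 2 ≤ hZ.eigenvalues j := by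
          have := mul_self_le_mul_self (by positivity) hlt.le
          rwa [Real.mul_self_sqrt hnn, ← pow_two] at this
        exact mul_le_mul_of_nonneg_right this (by positivity)
      · rw [span_coord_vanish _ _ hvW hj]
        simp
    · refine ⟨j0, Finset.mem_univ _, ?_⟩
      have hlt : a + b < Real.sqrt (hZ.eigenvalues j0) := by
        rw [hSZ] at hj0; simpa using hj0
      have hnn : 0 ≤ hZ.eigenvalues j0 :=
        (Matrix.posSemidef_conjTranspose_mul_self (X + Y)).eigenvalues_nonneg j0
      have h' : (a + b) ^ 2 < hZ.eigenvalues j0 := by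
        have := mul_self_lt_mul_self (by positivity) hlt
        rwa [Real.mul_self_sqrt hnn, ← pow_two] at this
      have : (0:ℝ) < ‖hZ.eigenvectorBasis.repr v j0‖ ^ 2 := by
        have := norm_pos_iff.2 hj0ne
        positivity
      exact mul_lt_mul_of_pos_right h' this
  have hZup : ‖Matrix.toEuclideanLin (X + Y) v‖ ≤ (a + b) * ‖v‖ := by
    have hadd : Matrix.toEuclideanLin (X + Y) v =
        Matrix.toEuclideanLin X v + Matrix.toEuclideanLin Y v := by
      rw [map_add]; rfl
    rw [hadd]
    calc ‖Matrix.toEuclideanLin X v + Matrix.toEuclideanLin Y v‖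
        ≤ ‖Matrix.toEuclideanLin X v‖ + ‖Matrix.toEuclideanLin Y v‖ := norm_add_le _ _
      _ ≤ a * ‖v‖ + b * ‖v‖ := add_le_add hXb hYb
      _ = (a + b) * ‖v‖ := by ring
  have := pow_le_pow_left₀ (norm_nonneg _) hZup 2
  linarith
lemma count_le_of_pA_lt {n : ℕ} (X : Matrix (Fin n) (Fin n) ℂ) {δ ε' : ℝ}
    (h : pA X < δ) (hδε : δ ≤ ε') :
    ((Finset.univ.filter fun i => ε' < sv X i).card : ℝ) ≤ δ * n := by
  classical
  rcases Nat.eq_zero_or_pos n with h0 | hpos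
  · subst h0
    simp
  · have hne : Nonempty (Fin n) := ⟨⟨0, hpos⟩⟩
    obtain ⟨i0, -, hi0⟩ := Finset.exists_min_image Finset.univ
      (fun i : Fin n => ((i : ℕ) : ℝ) / n + sv X i) ⟨⟨0, hpos⟩, Finset.mem_univ _⟩
    have hmin : pA X = ((i0 : ℕ) : ℝ) / n + sv X i0 := by
      refine le_antisymm (ciInf_le ?_ i0) (le_ciInf fun j => hi0 j (Finset.mem_univ _))
      exact Finite.bddBelow_range _
    have hval : ((i0 : ℕ) : ℝ) / n + sv X i0 < δ := hmin ▸ h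
    have hsv : sv X i0 < δ := by
      have : (0:ℝ) ≤ ((i0 : ℕ) : ℝ) / n := by positivity
      linarith
    have hsub : (Finset.univ.filter fun i => ε' < sv X i) ⊆
        Finset.univ.filter (fun i => i < i0) := by
      intro j hj
      simp only [Finset.mem_filter, Finset.mem_univ, true_and] at hj ⊢
      by_contra hge
      push_neg at hge
      have := sv_antitone X hge
      linarith
    have hcard : (Finset.univ.filter fun i : Fin n => i < i0).card = (i0 : ℕ) := by
      have : (Finset.univ.filter fun i : Fin n => i < i0) = Finset.Iio i0 := by
        ext j; simp
      rw [this, Fin.card_Iio]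
    have h1 : ((Finset.univ.filter fun i => ε' < sv X i).card : ℝ) ≤ ((i0 : ℕ) : ℝ) := by
      exact_mod_cast hcard ▸ Nat.cast_le.2 (Finset.card_le_card hsub)
    have h2 : (((i0 : ℕ) : ℝ)) < δ * n := by
      have hn : (0:ℝ) < n := by exact_mod_cast hpos
      have : ((i0 : ℕ) : ℝ) / n < δ := by
        have := sv_nonneg X i0
        linarith
      calc ((i0 : ℕ) : ℝ) = ((i0 : ℕ) : ℝ) / n * n := by field_simp
        _ < δ * n := by exact mul_lt_mul_of_pos_right this hn
    linarith

lemma specSymb_real {d : ℕ} {D : Set (Fin d → ℝ)} {C : (n : ℕ) → Matrix (Fin n) (Fin n) ℂ}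
    {f : (Fin d → ℝ) → ℂ} (h : SpecSymb D C f) {φ : ℝ → ℝ} (hφc : Continuous φ)
    (hφs : HasCompactSupport φ) :
    Tendsto (fun n : ℕ => (n : ℝ)⁻¹ * ∑ i : Fin n, φ (sv (C n) i)) atTop
      (nhds ((volume D).toReal⁻¹ * ∫ x in D, φ ‖f x‖)) := by
  have hF := h (fun t => (φ t : ℂ)) (Complex.continuous_ofReal.comp hφc)
    (hφs.comp_left (g := Complex.ofReal) Complex.ofReal_zero)
  have he : (fun n : ℕ => (n : ℂ)⁻¹ * ∑ i : Fin n, ((φ (sv (C n) i) : ℝ) : ℂ)) =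
      fun n : ℕ => (((n : ℝ)⁻¹ * ∑ i : Fin n, φ (sv (C n) i) : ℝ) : ℂ) := by
    funext n; push_cast; ring
  rw [he] at hF
  have hL : ((volume D).toReal⁻¹ • ∫ x in D, ((φ ‖f x‖ : ℝ) : ℂ)) =
      (((volume D).toReal⁻¹ * ∫ x in D, φ ‖f x‖ : ℝ) : ℂ) := by
    rw [Complex.real_smul, Complex.ofReal_mul]
    congr 1
    exact integral_ofReal (𝕜 := ℂ) (μ := volume.restrict D) (f := fun x => φ ‖f x‖)
  rw [hL] at hF
  have := (Complex.continuous_re.tendsto _).comp hF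
  simpa [Function.comp_def] using this

lemma count_small_of_symb {d : ℕ} {D : Set (Fin d → ℝ)} (hD : MeasurableSet D)
    (hD0 : 0 < volume D) (hDfin : volume D < ⊤)
    {C : (n : ℕ) → Matrix (Fin n) (Fin n) ℂ} {f : (Fin d → ℝ) → ℂ}
    (h : SpecSymb D C f) (hf : Measurable f) {ε δ : ℝ} (hε : 0 < ε) (hδ : 0 < δ)
    (hbad : (volume {x | x ∈ D ∧ ε / 4 < ‖f x‖}).toReal ≤ δ * (volume D).toReal) :
    ∀ᶠ n : ℕ in atTop,
      ((Finset.univ.filter fun i => ε / 2 < sv (C n) i).card : ℝ) ≤ 2 * δ * n := by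
  classical
  set V := (volume D).toReal with hVdef
  have hV : 0 < V := ENNReal.toReal_pos hD0.ne' hDfin.ne
  set φ : ℝ → ℝ := fun t => max 0 (min 1 (2 - (4 / ε) * |t|)) with hφ
  have hφc : Continuous φ := by
    apply continuous_const.max
    apply continuous_const.min
    exact continuous_const.sub ((continuous_const.mul continuous_abs))
  have hφ0 : ∀ t : ℝ, ε / 2 < |t| → φ t = 0 := by
    intro t ht
    have h2 : (2:ℝ) < (4 / ε) * |t| := by
      have h4 : (0:ℝ) < 4 / ε := by positivity
      calc (2:ℝ) = (4/ε) * (ε/2) := by field_simp; ring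
        _ < (4/ε) * |t| := by exact mul_lt_mul_of_pos_left ht h4
    have : min 1 (2 - (4 / ε) * |t|) ≤ 0 := le_trans (min_le_right _ _) (by linarith)
    exact max_eq_left this
  have hφs : HasCompactSupport φ := by
    apply HasCompactSupport.intro (isCompact_Icc (a := -(ε/2)) (b := ε/2))
    intro t ht
    apply hφ0
    rcases not_and_or.1 (fun hc => ht ⟨hc.1, hc.2⟩) with h' | h'
    · push_neg at h'; rw [abs_of_neg (by linarith)]; linarith
    · push_neg at h'; rw [abs_of_pos (by linarith)]; linarith
  have hφ_nonneg : ∀ t, 0 ≤ φ t := fun t => le_max_left _ _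
  have hφ_le_one : ∀ t, φ t ≤ 1 := fun t => max_le (by norm_num) (min_le_left _ _)
  have hφ1 : ∀ t : ℝ, |t| ≤ ε / 4 → φ t = 1 := by
    intro t ht
    have h4 : (0:ℝ) < 4 / ε := by positivity
    have : (4 / ε) * |t| ≤ 1 := by
      calc (4/ε) * |t| ≤ (4/ε) * (ε/4) := mul_le_mul_of_nonneg_left ht (le_of_lt h4)
        _ = 1 := by field_simp
    have hmin : min 1 (2 - (4 / ε) * |t|) = 1 := min_eq_left (by linarith)
    have hrfl : φ t = max 0 (min 1 (2 - (4 / ε) * |t|)) := rfl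
    rw [hrfl, hmin]
    exact max_eq_right zero_le_one
  have hu := specSymb_real h hφc hφs
  -- integral lower bound
  set S := {x : Fin d → ℝ | ε / 4 < ‖f x‖} with hSdef
  have hS : MeasurableSet S := measurableSet_lt measurable_const hf.norm
  haveI : IsFiniteMeasure (volume.restrict D) :=
    ⟨by rwa [Measure.restrict_apply_univ]⟩
  have hmeas1 : Measurable fun x => φ ‖f x‖ := hφc.measurable.comp hf.norm
  have hint1 : IntegrableOn (fun x => φ ‖f x‖) D volume := by
    apply Integrable.mono' (integrable_const 1) hmeas1.aestronglyMeasurable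
    filter_upwards with x
    rw [Real.norm_eq_abs, abs_le]
    exact ⟨by linarith [hφ_nonneg ‖f x‖], hφ_le_one _⟩
  have hint2 : IntegrableOn (Sᶜ.indicator fun _ => (1:ℝ)) D volume := by
    apply Integrable.mono' (integrable_const 1)
      ((measurable_const.indicator hS.compl).aestronglyMeasurable)
    filter_upwards with x
    rw [Real.norm_eq_abs, abs_le]
    constructor
    · by_cases hx : x ∈ Sᶜ <;> simp [Set.indicator_apply, hx]
    · by_cases hx : x ∈ Sᶜ <;> simp [Set.indicator_apply, hx]
  have hmono : ∀ x, Sᶜ.indicator (fun _ => (1:ℝ)) x ≤ φ ‖f x‖ := by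
    intro x
    by_cases hx : x ∈ Sᶜ
    · rw [Set.indicator_of_mem hx]
      have : ‖f x‖ ≤ ε / 4 := not_lt.1 hx
      rw [hφ1 ‖f x‖ (by rwa [abs_of_nonneg (norm_nonneg _)])]
    · rw [Set.indicator_of_notMem hx]
      exact hφ_nonneg _
  have hintind : ∫ x in D, Sᶜ.indicator (fun _ => (1:ℝ)) x = (volume (D \ S)).toReal := by
    rw [MeasureTheory.integral_indicator_const (1:ℝ) hS.compl, measureReal_def, Measure.restrict_apply hS.compl,
      smul_eq_mul, mul_one, Set.inter_comm, ← Set.diff_eq]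
  have hsplit : (volume (D ∩ S)).toReal + (volume (D \ S)).toReal = V := by
    rw [← ENNReal.toReal_add, measure_inter_add_diff D hS]
    · exact (lt_of_le_of_lt (measure_mono Set.inter_subset_left) hDfin).ne
    · exact (lt_of_le_of_lt (measure_mono Set.diff_subset) hDfin).ne
  have hbad' : (volume (D ∩ S)).toReal ≤ δ * V := by
    have : {x | x ∈ D ∧ ε / 4 < ‖f x‖} = D ∩ S := rfl
    rwa [this] at hbad
  have hIlow : V - δ * V ≤ ∫ x in D, φ ‖f x‖ := by
    have := MeasureTheory.setIntegral_mono_on hint2 hint1 hD (fun x _ => hmono x)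
    rw [hintind] at this
    linarith
  set L := (volume D).toReal⁻¹ * ∫ x in D, φ ‖f x‖ with hLdef
  have hLlow : 1 - δ ≤ L := by
    calc 1 - δ = ((1 - δ) * V) / V := by field_simp
      _ ≤ (∫ x in D, φ ‖f x‖) / V := by
          apply (div_le_div_iff_of_pos_right hV).2
          linarith
      _ = L := by rw [hLdef]; ring
  have hev1 : ∀ᶠ n : ℕ in atTop, L - δ < (n:ℝ)⁻¹ * ∑ i : Fin n, φ (sv (C n) i) :=
    (tendsto_order.1 hu).1 _ (by linarith)
  filter_upwards [hev1, eventually_ge_atTop 1] with n hn1 hn2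
  set cnt := (Finset.univ.filter fun i => ε / 2 < sv (C n) i).card with hcnt
  have hnpos : (0:ℝ) < n := by exact_mod_cast hn2
  have hsum : ∑ i : Fin n, φ (sv (C n) i) ≤ (n:ℝ) - (cnt:ℝ) := by
    have hsplit2 := Finset.sum_filter_add_sum_filter_not Finset.univ
      (fun i => ε / 2 < sv (C n) i) (fun i => φ (sv (C n) i))
    have hz : ∑ i ∈ Finset.univ.filter (fun i => ε / 2 < sv (C n) i), φ (sv (C n) i) = 0 := by
      apply Finset.sum_eq_zero
      intro i hi
      apply hφ0
      rw [abs_of_nonneg (sv_nonneg _ _)]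
      exact (Finset.mem_filter.1 hi).2
    have hle : ∑ i ∈ Finset.univ.filter (fun i => ¬ ε / 2 < sv (C n) i), φ (sv (C n) i) ≤
        ((Finset.univ.filter (fun i => ¬ ε / 2 < sv (C n) i)).card : ℝ) := by
      calc ∑ i ∈ Finset.univ.filter (fun i => ¬ ε / 2 < sv (C n) i), φ (sv (C n) i)
          ≤ ∑ _i ∈ Finset.univ.filter (fun i => ¬ ε / 2 < sv (C n) i), (1:ℝ) :=
            Finset.sum_le_sum (fun i _ => hφ_le_one _)
        _ = _ := by rw [Finset.sum_const, nsmul_eq_mul, mul_one]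
    have hcards : cnt + (Finset.univ.filter (fun i => ¬ ε / 2 < sv (C n) i)).card = n := by
      rw [hcnt, Finset.card_filter_add_card_filter_not]
      simp
    have : ((Finset.univ.filter (fun i => ¬ ε / 2 < sv (C n) i)).card : ℝ) = (n:ℝ) - cnt := by
      have := congrArg (fun x : ℕ => (x : ℝ)) hcards
      push_cast at this
      linarith
    rw [← hsplit2, hz, zero_add]
    linarith [hle]
  have hmul : (n:ℝ) * (L - δ) ≤ ∑ i : Fin n, φ (sv (C n) i) := by
    have h' := mul_le_mul_of_nonneg_left hn1.le hnpos.le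
    have : (n:ℝ) * ((n:ℝ)⁻¹ * ∑ i : Fin n, φ (sv (C n) i)) = ∑ i : Fin n, φ (sv (C n) i) := by
      field_simp
    linarith [h', this.symm.le, this.le]
  have : (n:ℝ) * (1 - 2*δ) ≤ (n:ℝ) * (L - δ) :=
    mul_le_mul_of_nonneg_left (by linarith) hnpos.le
  have hfin : (cnt:ℝ) ≤ 2 * δ * n := by nlinarith
  exact hfin

lemma pm_lt_bad {d : ℕ} {D : Set (Fin d → ℝ)} (hD0 : 0 < volume D) (hDfin : volume D < ⊤)
    {f : (Fin d → ℝ) → ℂ} (hf : Measurable f) {δ ε : ℝ} (hδ : 0 < δ) (hε : 0 < ε)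
    (hpm : pm D f < ENNReal.ofReal (min δ (ε / 4))) :
    (volume {x | x ∈ D ∧ ε / 4 < ‖f x‖}).toReal ≤ δ * (volume D).toReal := by
  rw [pm] at hpm
  simp only [iInf_lt_iff] at hpm
  obtain ⟨E, hE, hED, hlt⟩ := hpm
  set η := ENNReal.ofReal (min δ (ε / 4)) with hη
  have h1 : volume (D \ E) / volume D < η := lt_of_le_of_lt le_self_add hlt
  have h2 : essSup (fun x => (‖f x‖₊ : ℝ≥0∞)) (volume.restrict E) < η :=
    lt_of_le_of_lt le_add_self hlt
  have h1' : volume (D \ E) < η * volume D :=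
    (ENNReal.div_lt_iff (Or.inl hD0.ne') (Or.inl hDfin.ne)).1 h1
  have hae : ∀ᵐ x ∂(volume.restrict E), (‖f x‖₊ : ℝ≥0∞) < η := ae_lt_of_essSup_lt h2
  have hPmeas : MeasurableSet {x : Fin d → ℝ | ε / 4 < ‖f x‖} :=
    measurableSet_lt measurable_const hf.norm
  have hsub0 : {x : Fin d → ℝ | ε / 4 < ‖f x‖} ⊆ {x | ¬ ((‖f x‖₊ : ℝ≥0∞) < η)} := by
    intro x hx
    simp only [Set.mem_setOf_eq, not_lt]
    calc η ≤ ENNReal.ofReal (ε / 4) := ENNReal.ofReal_le_ofReal (min_le_right _ _)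
      _ ≤ ENNReal.ofReal ‖f x‖ := ENNReal.ofReal_le_ofReal (le_of_lt hx)
      _ = (‖f x‖₊ : ℝ≥0∞) := ofReal_norm _
  have hnull : volume ({x : Fin d → ℝ | ε / 4 < ‖f x‖} ∩ E) = 0 := by
    have := measure_mono_null hsub0 (ae_iff.1 hae)
    rwa [Measure.restrict_apply hPmeas] at this
  have hsub : {x | x ∈ D ∧ ε / 4 < ‖f x‖} ⊆
      (D \ E) ∪ ({x : Fin d → ℝ | ε / 4 < ‖f x‖} ∩ E) := by
    intro x hx
    by_cases hxE : x ∈ E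
    · exact Or.inr ⟨hx.2, hxE⟩
    · exact Or.inl ⟨hx.1, hxE⟩
  have hb : volume {x | x ∈ D ∧ ε / 4 < ‖f x‖} ≤ ENNReal.ofReal δ * volume D := by
    calc volume {x | x ∈ D ∧ ε / 4 < ‖f x‖}
        ≤ volume (D \ E) + volume ({x : Fin d → ℝ | ε / 4 < ‖f x‖} ∩ E) :=
          le_trans (measure_mono hsub) (measure_union_le _ _)
      _ = volume (D \ E) := by rw [hnull, add_zero]
      _ ≤ η * volume D := h1'.le
      _ ≤ ENNReal.ofReal δ * volume D := by
          apply mul_le_mul_left (ENNReal.ofReal_le_ofReal (min_le_left _ _))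
  have hfin : ENNReal.ofReal δ * volume D ≠ ⊤ := ENNReal.mul_ne_top ENNReal.ofReal_ne_top hDfin.ne
  calc (volume {x | x ∈ D ∧ ε / 4 < ‖f x‖}).toReal
      ≤ (ENNReal.ofReal δ * volume D).toReal := ENNReal.toReal_mono hfin hb
    _ = δ * (volume D).toReal := by rw [ENNReal.toReal_mul, ENNReal.toReal_ofReal hδ.le]
lemma pA_neg {n : ℕ} (X : Matrix (Fin n) (Fin n) ℂ) : pA (-X) = pA X := by
  unfold pA; rw [sv_neg]

end AuxLemmas

/-- if a group `G` in `𝒞_D` contains all zero-distributed pairs and every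
measurable function is a symbol for `G`, then `G` is closed. -/
theorem group_is_closed {d : ℕ} (D : Set (Fin d → ℝ))
    (hD : MeasurableSet D) (hD0 : 0 < volume D) (hDfin : volume D < ⊤)
    (G : Set (((n : ℕ) → Matrix (Fin n) (Fin n) ℂ) × ((Fin d → ℝ) → ℂ)))
    (hG : IsGroupIn D G)
    (hZ : ∀ C : (n : ℕ) → Matrix (Fin n) (Fin n) ℂ,
      SpecSymb D C (fun _ => 0) → (C, fun _ => (0 : ℂ)) ∈ G)
    (hall : ∀ k : (Fin d → ℝ) → ℂ, Measurable k →
      ∃ A : (n : ℕ) → Matrix (Fin n) (Fin n) ℂ, (A, k) ∈ G) :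
    ∀ (Bm : ℕ → (n : ℕ) → Matrix (Fin n) (Fin n) ℂ) (km : ℕ → (Fin d → ℝ) → ℂ)
      (A : (n : ℕ) → Matrix (Fin n) (Fin n) ℂ) (k : (Fin d → ℝ) → ℂ),
      Measurable k → (∀ m, (Bm m, km m) ∈ G) →
      Filter.Tendsto (fun m => dacs (Bm m) A) Filter.atTop (nhds 0) →
      Filter.Tendsto (fun m => dm D (km m) k) Filter.atTop (nhds 0) → (A, k) ∈ G := by
  intro Bm km A k hk hBm hacs hdm
  classical
  obtain ⟨A', hA'⟩ := hall k hk
  have hnegA' := hG.2.2 _ hA'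
  have hCmem : ∀ m, ((fun n => Bm m n + -(A' n)), km m + -k) ∈ G :=
    fun m => hG.2.1 _ (hBm m) _ hnegA'
  have hCsymb : ∀ m, SpecSymb D (fun n => Bm m n + -(A' n)) (km m + -k) :=
    fun m => (hG.1 _ (hCmem m)).2
  have hkmmeas : ∀ m, Measurable (km m) := fun m => (hG.1 _ (hBm m)).1
  have hfmeas : ∀ m, Measurable (km m + -k) := fun m => (hkmmeas m).add hk.neg
  have ZD : ∀ ε : ℝ, 0 < ε → ∀ δ0 : ℝ, 0 < δ0 →
      ∀ᶠ n : ℕ in atTop,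
        ((Finset.univ.filter fun i => ε < sv (A n - A' n) i).card : ℝ) ≤ δ0 * n := by
    intro ε hε δ0 hδ0
    set δ := min (δ0 / 4) (ε / 2) with hδdef
    have hδ : 0 < δ := lt_min (by linarith) (by linarith)
    have hδa : δ ≤ δ0 / 4 := min_le_left _ _
    have hδb : δ ≤ ε / 2 := min_le_right _ _
    have hm1 : ∀ᶠ m in atTop, dacs (Bm m) A < ENNReal.ofReal δ :=
      hacs.eventually_lt_const (ENNReal.ofReal_pos.2 hδ)
    have hm2 : ∀ᶠ m in atTop, dm D (km m) k < ENNReal.ofReal (min δ (ε / 4)) :=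
      hdm.eventually_lt_const (ENNReal.ofReal_pos.2 (lt_min hδ (by linarith)))
    obtain ⟨m, hm1, hm2⟩ := (hm1.and hm2).exists
    have hpmeq : (fun x => km m x - k x) = (km m + -k) := by
      funext x
      simp [sub_eq_add_neg]
    have hm2' : pm D (km m + -k) < ENNReal.ofReal (min δ (ε / 4)) := by
      rw [← hpmeq]; exact hm2
    have hbad := pm_lt_bad hD0 hDfin (hfmeas m) hδ hε hm2'
    have hcount1 := count_small_of_symb hD hD0 hDfin (hCsymb m) (hfmeas m) hε hδ hbad
    have hpa : ∀ᶠ n : ℕ in atTop, pA (Bm m n - A n) < δ := by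
      have hlim := Filter.eventually_lt_of_limsup_lt hm1
      filter_upwards [hlim] with n hn
      exact (ENNReal.ofReal_lt_ofReal_iff hδ).1 hn
    filter_upwards [hcount1, hpa, eventually_ge_atTop 1] with n hc1 hc2 hn1
    have hnpos : (0:ℝ) < n := by exact_mod_cast hn1
    have hw := weyl_count (Bm m n + -(A' n)) (A n - Bm m n)
      (a := ε / 2) (b := ε / 2) (by linarith) (by linarith)
    have hXY : Bm m n + -(A' n) + (A n - Bm m n) = A n - A' n := by abel
    have hεε : ε / 2 + ε / 2 = ε := by ring
    rw [hXY, hεε] at hw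
    have hY : ((Finset.univ.filter fun i => ε / 2 < sv (A n - Bm m n) i).card : ℝ) ≤ δ * n := by
      have hneg : A n - Bm m n = -(Bm m n - A n) := by abel
      rw [hneg]
      have hpa' : pA (-(Bm m n - A n)) < δ := by rwa [pA_neg]
      exact count_le_of_pA_lt _ hpa' hδb
    have hwR : ((Finset.univ.filter fun i => ε < sv (A n - A' n) i).card : ℝ) ≤
        ((Finset.univ.filter fun i => ε / 2 < sv (Bm m n + -(A' n)) i).card : ℝ) +
          ((Finset.univ.filter fun i => ε / 2 < sv (A n - Bm m n) i).card : ℝ) := by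
      exact_mod_cast hw
    nlinarith [hc1, hY, hwR, hnpos]
  have hVpos : 0 < (volume D).toReal := ENNReal.toReal_pos hD0.ne' hDfin.ne
  have hZsymb : SpecSymb D (fun n => A n - A' n) (fun _ => 0) := by
    intro F hFc hFs
    have htarget : ((volume D).toReal⁻¹ • ∫ x in D, F ‖(fun _ : Fin d → ℝ => (0:ℂ)) x‖) = F 0 := by
      simp only [norm_zero]
      rw [setIntegral_const, smul_smul, measureReal_def, inv_mul_cancel₀ hVpos.ne', one_smul]
    rw [htarget]
    obtain ⟨M, hM⟩ := hFs.exists_bound_of_continuous hFc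
    have hMnn : (0:ℝ) ≤ M := le_trans (norm_nonneg _) (hM 0)
    have hUC := hFs.uniformContinuous_of_continuous hFc
    rw [Metric.tendsto_nhds]
    intro η hη
    obtain ⟨ε, hε, hεprop⟩ := Metric.uniformContinuous_iff.1 hUC (η / 2) (by linarith)
    set δ0 := η / (4 * (M + 1)) with hδ0def
    have hδ0 : 0 < δ0 := by positivity
    filter_upwards [ZD (ε / 2) (by linarith) δ0 hδ0, eventually_ge_atTop 1] with n hcnt hn1
    have hnpos : (0:ℝ) < n := by exact_mod_cast hn1
    have hnC : (n:ℂ) ≠ 0 := by exact_mod_cast hnpos.ne'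
    rw [dist_eq_norm]
    have hexp : (n:ℂ)⁻¹ * (∑ i : Fin n, F (sv (A n - A' n) i)) - F 0 =
        (n:ℂ)⁻¹ * ∑ i : Fin n, (F (sv (A n - A' n) i) - F 0) := by
      rw [Finset.sum_sub_distrib, Finset.sum_const, Finset.card_univ, Fintype.card_fin, nsmul_eq_mul]
      field_simp
    rw [hexp]
    have hnorm1 : ‖(n:ℂ)⁻¹ * ∑ i : Fin n, (F (sv (A n - A' n) i) - F 0)‖ ≤
        (n:ℝ)⁻¹ * ∑ i : Fin n, ‖F (sv (A n - A' n) i) - F 0‖ := by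
      rw [norm_mul, norm_inv, Complex.norm_natCast]
      exact mul_le_mul_of_nonneg_left (norm_sum_le _ _) (by positivity)
    set p : Fin n → Prop := fun i => ε / 2 < sv (A n - A' n) i with hp
    have hsplit := Finset.sum_filter_add_sum_filter_not Finset.univ p
      (fun i => ‖F (sv (A n - A' n) i) - F 0‖)
    have hbig : ∑ i ∈ Finset.univ.filter p, ‖F (sv (A n - A' n) i) - F 0‖ ≤
        ((Finset.univ.filter p).card : ℝ) * (2 * M) := by
      calc ∑ i ∈ Finset.univ.filter p, ‖F (sv (A n - A' n) i) - F 0‖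
          ≤ ∑ _i ∈ Finset.univ.filter p, (2 * M) := by
            apply Finset.sum_le_sum
            intro i _
            calc ‖F (sv (A n - A' n) i) - F 0‖ ≤ ‖F (sv (A n - A' n) i)‖ + ‖F 0‖ :=
                norm_sub_le _ _
              _ ≤ M + M := add_le_add (hM _) (hM _)
              _ = 2 * M := by ring
        _ = _ := by rw [Finset.sum_const, nsmul_eq_mul]
    have hsmall : ∑ i ∈ Finset.univ.filter (fun i => ¬ p i), ‖F (sv (A n - A' n) i) - F 0‖ ≤
        (n : ℝ) * (η / 2) := by
      calc ∑ i ∈ Finset.univ.filter (fun i => ¬ p i), ‖F (sv (A n - A' n) i) - F 0‖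
          ≤ ∑ _i ∈ Finset.univ.filter (fun i => ¬ p i), (η / 2) := by
            apply Finset.sum_le_sum
            intro i hi
            have hsv : sv (A n - A' n) i ≤ ε / 2 := not_lt.1 (Finset.mem_filter.1 hi).2
            have hd : dist (sv (A n - A' n) i) 0 < ε := by
              rw [Real.dist_eq, sub_zero, abs_of_nonneg (sv_nonneg _ _)]
              linarith
            have := hεprop hd
            rw [dist_eq_norm] at this
            exact this.le
        _ = ((Finset.univ.filter (fun i => ¬ p i)).card : ℝ) * (η / 2) := by
            rw [Finset.sum_const, nsmul_eq_mul]
        _ ≤ (n : ℝ) * (η / 2) := by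
            apply mul_le_mul_of_nonneg_right _ (by linarith)
            have hcard := Finset.card_filter_le Finset.univ (fun i => ¬ p i)
            rw [Finset.card_univ, Fintype.card_fin] at hcard
            exact_mod_cast hcard
    have hcnt' : ((Finset.univ.filter p).card : ℝ) ≤ δ0 * n := hcnt
    have hsum_le : ∑ i : Fin n, ‖F (sv (A n - A' n) i) - F 0‖ ≤ δ0 * n * (2 * M) + n * (η / 2) := by
      rw [← hsplit]
      have h2M : (0:ℝ) ≤ 2 * M := by linarith
      nlinarith [hbig, hsmall, hcnt']
    have heq : (n:ℝ)⁻¹ * (δ0 * n * (2 * M) + n * (η / 2)) = δ0 * (2 * M) + η / 2 := by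
      field_simp
    have hlt : δ0 * (2 * M) + η / 2 < η := by
      have hkey : η / (4 * (M + 1)) * (2 * M) < η / 2 := by
        rw [div_mul_eq_mul_div, div_lt_div_iff₀ (by positivity) (by norm_num)]
        nlinarith
      rw [hδ0def]
      linarith
    calc ‖(n:ℂ)⁻¹ * ∑ i : Fin n, (F (sv (A n - A' n) i) - F 0)‖
        ≤ (n:ℝ)⁻¹ * ∑ i : Fin n, ‖F (sv (A n - A' n) i) - F 0‖ := hnorm1
      _ ≤ (n:ℝ)⁻¹ * (δ0 * n * (2 * M) + n * (η / 2)) :=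
          mul_le_mul_of_nonneg_left hsum_le (by positivity)
      _ = δ0 * (2 * M) + η / 2 := heq
      _ < η := hlt
  have hZmem := hZ _ hZsymb
  have hsum := hG.2.1 _ hZmem _ hA'
  have hfin : (A, k) = ((fun n => (fun n => A n - A' n) n + A' n),
      ((fun _ : Fin d → ℝ => (0:ℂ)) + k)) := by
    simp only [Prod.mk.injEq]
    constructor
    · funext n
      simp
    · funext x
      simp
  rw [hfin]
  exact hsum
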